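/- (Inactive time constraint from the excited state: the counterexample of Section IV C.) There exists ε > 0 such that for every measurable control s : [0,ε] → [0,1] and every absolutely continuous v : [0,ε] → ℝ³ with v̇(t) = M(s(t)) v(t) almost everywhere and v(0) = (1, 0, 0), one has v₃(t) ≥ 0 for all t ∈ [0, ε]. Consequently, starting from the excited state of B, the cost Tr(Cρ(t)) = v₃(t)/2 cannot be made smaller than its initial value 0 for any t ≤ ε, no matter the control. -/

import Mathlib

open MeasureTheory

noncomputable section

namespace Stmt10

/-- The Bloch-equation generator `M(s)` for the spin-1/2 problem with driver `B = σx/2`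
and target `C = σz/2`. -/
def M (s : ℝ) : Matrix (Fin 3) (Fin 3) ℝ :=
  !![0, -(1 - s), 0; 1 - s, 0, -s; 0, s, 0]

/-- `v` is an absolutely continuous solution of the controlled Bloch equation
`v̇(t) = M(s(t)) v(t)` on `[0, tf]` (integral form). -/
def IsBlochSol (tf : ℝ) (s : ℝ → ℝ) (v : ℝ → Fin 3 → ℝ) : Prop :=
  IntervalIntegrable (fun τ => (M (s τ)).mulVec (v τ)) volume 0 tf ∧
  ∀ t ∈ Set.Icc (0 : ℝ) tf, v t = v 0 + ∫ τ in (0 : ℝ)..t, (M (s τ)).mulVec (v τ)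

lemma mulVec_M (σ : ℝ) (w : Fin 3 → ℝ) :
    (M σ).mulVec w = ![-(1 - σ) * w 1, (1 - σ) * w 0 - σ * w 2, σ * w 1] := by
  funext i
  fin_cases i <;>
    simp [M, Matrix.mulVec, Fin.sum_univ_three, Matrix.vecHead, Matrix.vecTail] <;> ring

set_option maxHeartbeats 1000000 in
theorem excited_state_inactive_constraint :
    ∃ ε > 0, ∀ (s : ℝ → ℝ), Measurable s →
      (∀ t ∈ Set.Icc (0 : ℝ) ε, s t ∈ Set.Icc (0 : ℝ) 1) →
      ∀ v : ℝ → Fin 3 → ℝ, IsBlochSol ε s v → v 0 = ![1, 0, 0] →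
      ∀ t ∈ Set.Icc (0 : ℝ) ε, 0 ≤ v t 2 := by
  refine ⟨1/2, by norm_num, ?_⟩
  intro s hsm hs01 v hsol hv0
  obtain ⟨hInt, hEq⟩ := hsol
  set f : ℝ → Fin 3 → ℝ := fun τ => (M (s τ)).mulVec (v τ) with hfdef
  have hs0 : ∀ τ ∈ Set.Icc (0:ℝ) (1/2), 0 ≤ s τ := fun τ h => (hs01 τ h).1
  have hs1 : ∀ τ ∈ Set.Icc (0:ℝ) (1/2), s τ ≤ 1 := fun τ h => (hs01 τ h).2
  have hf0 : ∀ τ, f τ 0 = -(1 - s τ) * v τ 1 := fun τ => by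
    rw [hfdef]; simp only [mulVec_M]; simp
  have hf1 : ∀ τ, f τ 1 = (1 - s τ) * v τ 0 - s τ * v τ 2 := fun τ => by
    rw [hfdef]; simp only [mulVec_M]; simp
  have hf2 : ∀ τ, f τ 2 = s τ * v τ 1 := fun τ => by
    rw [hfdef]; simp only [mulVec_M]; simp
  have h00 : v 0 0 = 1 := by rw [hv0]; simp
  have h01 : v 0 1 = 0 := by rw [hv0]; simp
  have h02 : v 0 2 = 0 := by rw [hv0]; simp
  have hhalf : (0:ℝ) ≤ 1/2 := by norm_num
  have h0mem : (0:ℝ) ∈ Set.Icc (0:ℝ) (1/2) := ⟨le_rfl, hhalf⟩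
  have hsubset : ∀ a b : ℝ, a ∈ Set.Icc (0:ℝ) (1/2) → b ∈ Set.Icc (0:ℝ) (1/2) →
      Set.uIcc a b ⊆ Set.uIcc (0:ℝ) (1/2) := by
    intro a b ha hb
    apply Set.uIcc_subset_uIcc <;> rw [Set.uIcc_of_le hhalf]
    exacts [ha, hb]
  -- component interval integrability
  have hIntComp : ∀ (i : Fin 3), ∀ a b : ℝ, a ∈ Set.Icc (0:ℝ) (1/2) → b ∈ Set.Icc (0:ℝ) (1/2) →
      IntervalIntegrable (fun τ => f τ i) volume a b := by
    intro i a b ha hb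
    have h := hInt.mono_set (hsubset a b ha hb)
    exact ⟨(ContinuousLinearMap.proj (R := ℝ) (φ := fun _ : Fin 3 => ℝ) i).integrable_comp h.1,
      (ContinuousLinearMap.proj (R := ℝ) (φ := fun _ : Fin 3 => ℝ) i).integrable_comp h.2⟩
  -- componentwise integral equation
  have hC : ∀ t ∈ Set.Icc (0:ℝ) (1/2), ∀ i : Fin 3,
      v t i = v 0 i + ∫ τ in (0:ℝ)..t, f τ i := by
    intro t ht i
    have h1 := congrFun (hEq t ht) i
    have h2 : (∫ τ in (0:ℝ)..t, f τ) i = ∫ τ in (0:ℝ)..t, f τ i := by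
      have := (ContinuousLinearMap.proj (R := ℝ) (φ := fun _ : Fin 3 => ℝ)
        i).intervalIntegral_comp_comm (hInt.mono_set (hsubset 0 t h0mem ht))
      simpa using this.symm
    simpa [h2] using h1
  -- continuity of components
  have hvc : ∀ i : Fin 3, ContinuousOn (fun t => v t i) (Set.Icc (0:ℝ) (1/2)) := by
    intro i
    have hcont : ContinuousOn (fun t => v 0 i + ∫ τ in (0:ℝ)..t, f τ i)
        (Set.Icc (0:ℝ) (1/2)) := by
      apply ContinuousOn.add continuousOn_const
      have := intervalIntegral.continuousOn_primitive_interval'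
        (hIntComp i 0 (1/2) h0mem ⟨hhalf, le_rfl⟩) (Set.left_mem_uIcc (a := (0:ℝ)) (b := 1/2))
      rwa [Set.uIcc_of_le hhalf] at this
    exact hcont.congr fun t ht => hC t ht i
  have hvcont : ContinuousOn v (Set.Icc (0:ℝ) (1/2)) := continuousOn_pi.2 hvc
  -- a priori bound ‖v t‖ ≤ 2
  have hfle : ∀ τ ∈ Set.Icc (0:ℝ) (1/2), ‖f τ‖ ≤ ‖v τ‖ := by
    intro τ hτ
    have ha := hs0 τ hτ; have hb := hs1 τ hτ
    refine (pi_norm_le_iff_of_nonneg (norm_nonneg _)).2 fun i => ?_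
    have b0 : |v τ 0| ≤ ‖v τ‖ := by
      simpa [Real.norm_eq_abs] using norm_le_pi_norm (v τ) 0
    have b1 : |v τ 1| ≤ ‖v τ‖ := by
      simpa [Real.norm_eq_abs] using norm_le_pi_norm (v τ) 1
    have b2 : |v τ 2| ≤ ‖v τ‖ := by
      simpa [Real.norm_eq_abs] using norm_le_pi_norm (v τ) 2
    obtain ⟨c0, c0'⟩ := abs_le.1 b0
    obtain ⟨c1, c1'⟩ := abs_le.1 b1
    obtain ⟨c2, c2'⟩ := abs_le.1 b2
    have hK : 0 ≤ ‖v τ‖ := norm_nonneg _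
    fin_cases i
    · show ‖f τ 0‖ ≤ ‖v τ‖
      rw [hf0, Real.norm_eq_abs, abs_le]
      constructor <;> nlinarith
    · show ‖f τ 1‖ ≤ ‖v τ‖
      rw [hf1, Real.norm_eq_abs, abs_le]
      constructor <;> nlinarith
    · show ‖f τ 2‖ ≤ ‖v τ‖
      rw [hf2, Real.norm_eq_abs, abs_le]
      constructor <;> nlinarith
  obtain ⟨T, hT, hTmax⟩ := isCompact_Icc.exists_isMaxOn (s := Set.Icc (0:ℝ) (1/2))
    ⟨0, h0mem⟩ hvcont.norm
  have hvnorm2 : ∀ t ∈ Set.Icc (0:ℝ) (1/2), ‖v t‖ ≤ 2 := by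
    have hK : ‖v T‖ ≤ 2 := by
      have h1 : v T = v 0 + ∫ τ in (0:ℝ)..T, f τ := hEq T hT
      have h2 : ‖∫ τ in (0:ℝ)..T, f τ‖ ≤ ‖v T‖ * |T - 0| := by
        apply intervalIntegral.norm_integral_le_of_norm_le_const
        intro x hx
        rw [Set.uIoc_of_le hT.1] at hx
        have hx' : x ∈ Set.Icc (0:ℝ) (1/2) := ⟨hx.1.le, hx.2.trans hT.2⟩
        exact (hfle x hx').trans (hTmax hx')
      have h3 : ‖v 0‖ ≤ 1 := by
        rw [hv0]
        refine (pi_norm_le_iff_of_nonneg zero_le_one).2 fun i => ?_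
        fin_cases i <;> simp
      have h4 : ‖v T‖ ≤ ‖v 0‖ + ‖∫ τ in (0:ℝ)..T, f τ‖ := by
        rw [h1]; exact norm_add_le _ _
      have h5 : |T - 0| ≤ 1/2 := by
        rw [sub_zero, abs_of_nonneg hT.1]; exact hT.2
      nlinarith [norm_nonneg (v T), norm_nonneg (∫ τ in (0:ℝ)..T, f τ), abs_nonneg (T - 0)]
    intro t ht; exact (hTmax ht).trans hK
  have hvabs : ∀ t ∈ Set.Icc (0:ℝ) (1/2), ∀ i : Fin 3, |v t i| ≤ 2 := by
    intro t ht i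
    have h := norm_le_pi_norm (v t) i
    rw [Real.norm_eq_abs] at h
    exact h.trans (hvnorm2 t ht)
  -- v₀ stays nonnegative
  have hv0nn : ∀ t ∈ Set.Icc (0:ℝ) (1/2), 0 ≤ v t 0 := by
    intro t ht
    have heq0 : v t 0 = 1 + ∫ τ in (0:ℝ)..t, f τ 0 := by rw [hC t ht 0, h00]
    have h2 : ‖∫ τ in (0:ℝ)..t, f τ 0‖ ≤ 2 * |t - 0| := by
      apply intervalIntegral.norm_integral_le_of_norm_le_const
      intro x hx
      rw [Set.uIoc_of_le ht.1] at hx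
      have hx' : x ∈ Set.Icc (0:ℝ) (1/2) := ⟨hx.1.le, hx.2.trans ht.2⟩
      have ha := hs0 x hx'; have hb := hs1 x hx'
      have hv1 := hvabs x hx' 1
      rw [hf0 x, Real.norm_eq_abs, abs_mul, abs_neg, abs_of_nonneg (by linarith : (0:ℝ) ≤ 1 - s x)]
      nlinarith [abs_nonneg (v x 1)]
    rw [Real.norm_eq_abs, sub_zero, abs_of_nonneg ht.1] at h2
    obtain ⟨hl, _⟩ := abs_le.1 h2
    have ht2 : t ≤ 1/2 := ht.2
    linarith
  -- auxiliary scalar integrands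
  set g₀ : ℝ → ℝ := fun τ => (1 - s τ) * v τ 0 with hg₀
  set g₂ : ℝ → ℝ := fun τ => s τ * v τ 2 with hg₂
  have hg₂int : ∀ a b : ℝ, a ∈ Set.Icc (0:ℝ) (1/2) → b ∈ Set.Icc (0:ℝ) (1/2) → a ≤ b →
      IntervalIntegrable g₂ volume a b := by
    intro a b ha hb hab
    rw [intervalIntegrable_iff_integrableOn_Ioc_of_le hab]
    have hsub : Set.Ioc a b ⊆ Set.Icc (0:ℝ) (1/2) :=
      fun x hx => ⟨ha.1.trans hx.1.le, hx.2.trans hb.2⟩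
    have haem : AEMeasurable (fun τ => v τ 2) (volume.restrict (Set.Ioc a b)) := by
      have h := (hvc 2).aemeasurable (μ := volume) measurableSet_Icc
      exact h.mono_measure (Measure.restrict_mono hsub le_rfl)
    have hmeas : AEMeasurable g₂ (volume.restrict (Set.Ioc a b)) := hsm.aemeasurable.mul haem
    refine Integrable.mono' (g := fun _ => (2:ℝ)) ?_ hmeas.aestronglyMeasurable ?_
    · exact integrableOn_const measure_Ioc_lt_top.ne
    · refine (ae_restrict_iff' measurableSet_Ioc).2 (Filter.Eventually.of_forall fun x hx => ?_)
      have hx' := hsub hx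
      have ha' := hs0 x hx'; have hb' := hs1 x hx'
      have h2 := hvabs x hx' 2
      show ‖s x * v x 2‖ ≤ 2
      rw [Real.norm_eq_abs, abs_mul, abs_of_nonneg ha']
      exact le_trans (mul_le_mul hb' h2 (abs_nonneg _) zero_le_one) (by norm_num)
  have hg₀int : ∀ a b : ℝ, a ∈ Set.Icc (0:ℝ) (1/2) → b ∈ Set.Icc (0:ℝ) (1/2) → a ≤ b →
      IntervalIntegrable g₀ volume a b := by
    intro a b ha hb hab
    have hsum : g₀ = (fun τ => f τ 1) + g₂ := by
      funext τ; simp only [Pi.add_apply, hf1 τ, hg₀, hg₂]; ring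
    rw [hsum]
    exact (hIntComp 1 a b ha hb).add (hg₂int a b ha hb hab)
  set A : ℝ → ℝ := fun t => ∫ τ in (0:ℝ)..t, g₀ τ with hA
  have hAnn : ∀ t ∈ Set.Icc (0:ℝ) (1/2), 0 ≤ A t := by
    intro t ht
    apply intervalIntegral.integral_nonneg ht.1
    intro u hu
    have hu' : u ∈ Set.Icc (0:ℝ) (1/2) := ⟨hu.1, hu.2.trans ht.2⟩
    exact mul_nonneg (by linarith [hs1 u hu']) (hv0nn u hu')
  have hAmono : ∀ t' t : ℝ, t' ∈ Set.Icc (0:ℝ) (1/2) → t ∈ Set.Icc (0:ℝ) (1/2) → t' ≤ t →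
      A t' ≤ A t := by
    intro t' t ht' ht h
    have h1 : A t' + ∫ τ in t'..t, g₀ τ = A t :=
      intervalIntegral.integral_add_adjacent_intervals
        (hg₀int 0 t' h0mem ht' ht'.1) (hg₀int t' t ht' ht h)
    have h2 : 0 ≤ ∫ τ in t'..t, g₀ τ := by
      apply intervalIntegral.integral_nonneg h
      intro u hu
      have hu' : u ∈ Set.Icc (0:ℝ) (1/2) := ⟨ht'.1.trans hu.1, hu.2.trans ht.2⟩
      exact mul_nonneg (by linarith [hs1 u hu']) (hv0nn u hu')
    linarith
  -- the max of -(v · 2)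
  obtain ⟨S, hS, hSmax⟩ := isCompact_Icc.exists_isMaxOn (s := Set.Icc (0:ℝ) (1/2))
    ⟨0, h0mem⟩ (hvc 2).neg
  set N : ℝ := max (-(v S 2)) 0 with hN
  have hNnn : 0 ≤ N := le_max_right _ _
  have hNlb : ∀ τ ∈ Set.Icc (0:ℝ) (1/2), -N ≤ v τ 2 := by
    intro τ hτ
    have h1 : -(v τ 2) ≤ -(v S 2) := hSmax hτ
    have h2 : -(v S 2) ≤ N := le_max_left _ _
    linarith
  -- L1 : upper bound for v · 1
  have L1 : ∀ t ∈ Set.Icc (0:ℝ) (1/2), ∀ τ ∈ Set.Icc (0:ℝ) t, v τ 1 ≤ A t + τ * N := by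
    intro t ht τ hτ
    have hτ' : τ ∈ Set.Icc (0:ℝ) (1/2) := ⟨hτ.1, hτ.2.trans ht.2⟩
    have h1 : v τ 1 = ∫ σ in (0:ℝ)..τ, f σ 1 := by rw [hC τ hτ' 1, h01, zero_add]
    have h2 : (∫ σ in (0:ℝ)..τ, f σ 1) ≤ ∫ σ in (0:ℝ)..τ, (g₀ σ + N) := by
      apply intervalIntegral.integral_mono_on hτ.1 (hIntComp 1 0 τ h0mem hτ')
        ((hg₀int 0 τ h0mem hτ' hτ.1).add intervalIntegrable_const)
      intro x hx
      have hx' : x ∈ Set.Icc (0:ℝ) (1/2) := ⟨hx.1, hx.2.trans hτ'.2⟩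
      have ha := hs0 x hx'; have hb := hs1 x hx'
      have hv := hNlb x hx'
      rw [hf1 x]
      have key : s x * (-(v x 2)) ≤ N := by
        rcases le_or_gt (-(v x 2)) 0 with h | h
        · nlinarith
        · nlinarith
      simp only [hg₀]
      linarith
    have h3 : (∫ σ in (0:ℝ)..τ, (g₀ σ + N)) = A τ + τ * N := by
      rw [intervalIntegral.integral_add (hg₀int 0 τ h0mem hτ' hτ.1) intervalIntegrable_const,
        intervalIntegral.integral_const]
      simp [hA, smul_eq_mul]
    have h4 : A τ ≤ A t := hAmono τ t hτ' ht hτ.2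
    linarith
  -- L2 : upper bound for v · 2
  have L2 : ∀ t ∈ Set.Icc (0:ℝ) (1/2), ∀ τ ∈ Set.Icc (0:ℝ) t,
      v τ 2 ≤ A t * τ + τ^2 * N / 2 := by
    intro t ht τ hτ
    have hτ' : τ ∈ Set.Icc (0:ℝ) (1/2) := ⟨hτ.1, hτ.2.trans ht.2⟩
    have h1 : v τ 2 = ∫ σ in (0:ℝ)..τ, f σ 2 := by rw [hC τ hτ' 2, h02, zero_add]
    have hlin : IntervalIntegrable (fun σ : ℝ => σ * N) volume 0 τ :=
      (continuous_id.mul continuous_const).intervalIntegrable _ _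
    have hcst : IntervalIntegrable (fun σ : ℝ => A t + σ * N) volume 0 τ :=
      intervalIntegrable_const.add hlin
    have h2 : (∫ σ in (0:ℝ)..τ, f σ 2) ≤ ∫ σ in (0:ℝ)..τ, (A t + σ * N) := by
      apply intervalIntegral.integral_mono_on hτ.1 (hIntComp 2 0 τ h0mem hτ') hcst
      intro x hx
      have hx' : x ∈ Set.Icc (0:ℝ) (1/2) := ⟨hx.1, hx.2.trans hτ'.2⟩
      have hbd := L1 t ht x ⟨hx.1, hx.2.trans hτ.2⟩
      have hbnn : 0 ≤ A t + x * N := add_nonneg (hAnn t ht) (mul_nonneg hx.1 hNnn)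
      rw [hf2 x]
      rcases le_or_gt 0 (v x 1) with h | h
      · have := mul_le_mul_of_nonneg_right (hs1 x hx') h
        rw [one_mul] at this
        linarith
      · have := mul_nonpos_of_nonneg_of_nonpos (hs0 x hx') h.le
        linarith
    have h3 : (∫ σ in (0:ℝ)..τ, (A t + σ * N)) = A t * τ + τ^2 * N / 2 := by
      rw [intervalIntegral.integral_add intervalIntegrable_const hlin,
        intervalIntegral.integral_const, intervalIntegral.integral_mul_const, integral_id]
      simp only [smul_eq_mul, sub_zero]
      ring
    linarith
  -- L3 : lower bound for v · 1
  have L3 : ∀ t ∈ Set.Icc (0:ℝ) (1/2), -(t^3 * N / 6) ≤ v t 1 := by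
    intro t ht
    have hsplit : v t 1 = A t - ∫ τ in (0:ℝ)..t, g₂ τ := by
      have h1 : v t 1 = ∫ τ in (0:ℝ)..t, f τ 1 := by rw [hC t ht 1, h01, zero_add]
      have h2 : (fun τ => f τ 1) = fun τ => g₀ τ - g₂ τ := by
        funext τ; rw [hf1 τ]
      rw [h1, h2, intervalIntegral.integral_sub (hg₀int 0 t h0mem ht ht.1)
        (hg₂int 0 t h0mem ht ht.1)]
    have hsq : IntervalIntegrable (fun τ : ℝ => τ^2 * N / 2) volume 0 t :=
      (((continuous_pow 2).mul continuous_const).div_const 2).intervalIntegrable _ _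
    have hlin3 : IntervalIntegrable (fun τ : ℝ => A t * τ) volume 0 t :=
      (continuous_const.mul continuous_id).intervalIntegrable _ _
    have hpoly : IntervalIntegrable (fun τ : ℝ => A t * τ + τ^2 * N / 2) volume 0 t :=
      hlin3.add hsq
    have h2 : (∫ τ in (0:ℝ)..t, g₂ τ) ≤ ∫ τ in (0:ℝ)..t, (A t * τ + τ^2 * N / 2) := by
      apply intervalIntegral.integral_mono_on ht.1 (hg₂int 0 t h0mem ht ht.1) hpoly
      intro x hx
      have hx' : x ∈ Set.Icc (0:ℝ) (1/2) := ⟨hx.1, hx.2.trans ht.2⟩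
      have hbd := L2 t ht x hx
      have hbnn : 0 ≤ A t * x + x^2 * N / 2 := by
        have h1 : 0 ≤ A t * x := mul_nonneg (hAnn t ht) hx.1
        have h2 : 0 ≤ x^2 * N / 2 := div_nonneg (mul_nonneg (sq_nonneg x) hNnn) (by norm_num)
        linarith
      simp only [hg₂]
      rcases le_or_gt 0 (v x 2) with h | h
      · have := mul_le_mul_of_nonneg_right (hs1 x hx') h
        rw [one_mul] at this
        linarith
      · have := mul_nonpos_of_nonneg_of_nonpos (hs0 x hx') h.le
        linarith
    have h3 : (∫ τ in (0:ℝ)..t, (A t * τ + τ^2 * N / 2)) = A t * t^2 / 2 + t^3 * N / 6 := by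
      have e1 : (∫ τ in (0:ℝ)..t, τ^2 * N / 2) = (∫ τ in (0:ℝ)..t, τ^2) * (N / 2) := by
        rw [← intervalIntegral.integral_mul_const]
        congr 1; funext τ; ring
      rw [intervalIntegral.integral_add hlin3 hsq,
        intervalIntegral.integral_const_mul, integral_id, e1, integral_pow]
      push_cast
      ring
    have hAt := hAnn t ht
    have ht2 : t ≤ 1/2 := ht.2
    have ht0 : 0 ≤ t := ht.1
    have hprod : 0 ≤ A t * (1 - t^2 / 2) := mul_nonneg hAt (by nlinarith)
    nlinarith
  -- L4 : lower bound for v · 2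
  have L4 : ∀ t ∈ Set.Icc (0:ℝ) (1/2), -(t^4 * N / 24) ≤ v t 2 := by
    intro t ht
    have h1 : v t 2 = ∫ τ in (0:ℝ)..t, f τ 2 := by rw [hC t ht 2, h02, zero_add]
    have hpoly : IntervalIntegrable (fun τ : ℝ => -(τ^3 * N / 6)) volume 0 t :=
      ((((continuous_pow 3).mul continuous_const).div_const 6).neg).intervalIntegrable _ _
    have h2 : (∫ τ in (0:ℝ)..t, (-(τ^3 * N / 6))) ≤ ∫ τ in (0:ℝ)..t, f τ 2 := by
      apply intervalIntegral.integral_mono_on ht.1 hpoly (hIntComp 2 0 t h0mem ht)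
      intro x hx
      have hx' : x ∈ Set.Icc (0:ℝ) (1/2) := ⟨hx.1, hx.2.trans ht.2⟩
      have hbd := L3 x hx'
      have hbnn : 0 ≤ x^3 * N / 6 :=
        div_nonneg (mul_nonneg (pow_nonneg hx.1 3) hNnn) (by norm_num)
      rw [hf2 x]
      rcases le_or_gt 0 (v x 1) with h | h
      · nlinarith [mul_nonneg (hs0 x hx') h]
      · have hkey : v x 1 ≤ s x * v x 1 := by nlinarith [hs1 x hx']
        linarith
    have h3 : (∫ τ in (0:ℝ)..t, (-(τ^3 * N / 6))) = -(t^4 * N / 24) := by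
      have e1 : (∫ τ in (0:ℝ)..t, τ^3 * N / 6) = (∫ τ in (0:ℝ)..t, τ^3) * (N / 6) := by
        rw [← intervalIntegral.integral_mul_const]
        congr 1; funext τ; ring
      rw [intervalIntegral.integral_neg, e1, integral_pow]
      push_cast
      ring
    linarith [h2, h3, h1.symm]
  -- conclude N = 0
  have hNz : N = 0 := by
    have h1 := L4 S hS
    have hS4 : S^4 ≤ 1/16 := by
      have h := pow_le_pow_left₀ hS.1 hS.2 4
      norm_num at h
      linarith
    have h2 : -(v S 2) ≤ N / 384 := by
      have hm : S^4 * N ≤ (1/16) * N := mul_le_mul_of_nonneg_right hS4 hNnn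
      linarith
    have h3 : N ≤ N / 384 := max_le h2 (by linarith)
    linarith
  intro t ht
  have := L4 t ht
  rw [hNz] at this
  simpa using this

end Stmt10
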